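/- Let X, Y be two independent copies of a Markov process on ℕ with common transition kernel p_t and invariant distribution μ, satisfying the uniform bound ‖p_t(x,·) − μ‖_TV ≤ e^{−t/ξ₁} for all x. Then for any t > 0, any α ∈ (0,1), and h_α(t) = sup{x : μ(x) ≥ α^{-1} e^{−t/ξ₁}}, the meeting probability satisfies P_{(x,y)}(X_t = Y_t) ≥ (1−α)² ∑_{z ≤ h_α(t)} μ(z)². -/
import Mathlib


open MeasureTheory

/-- Meeting probability lower bound for two independent copies of a Markov process
with uniform mixing bound ‖p_t(x,·) − μ‖_TV ≤ e^{−t/ξ₁}: for α ∈ (0,1) and any h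
with μ(z) ≥ α⁻¹e^{−t/ξ₁} for all z ≤ h (as holds for h = h_α(t)),
P_{(x,y)}(X_t = Y_t) = ∑_z p_t(x,z)p_t(y,z) ≥ (1−α)² ∑_{z≤h} μ(z)². -/
theorem stmt_12 (ξ₁ : ℝ) (hξ₁ : 0 < ξ₁)
    (p : ℝ → ℕ → ℕ → ℝ) (hp_nonneg : ∀ t x z, 0 ≤ p t x z)
    (hp_prob : ∀ t x, 0 ≤ t → HasSum (p t x) 1)
    (μ : ℕ → ℝ) (hμ_prob : HasSum μ 1) (hμ_nonneg : ∀ z, 0 ≤ μ z)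
    (hTV : ∀ x : ℕ, ∀ t : ℝ, 0 ≤ t →
      (1 / 2) * ∑' z, |p t x z - μ z| ≤ Real.exp (-t / ξ₁))
    (t : ℝ) (ht : 0 < t) (α : ℝ) (hα : α ∈ Set.Ioo (0 : ℝ) 1)
    (h : ℕ) (hh : ∀ z ≤ h, α⁻¹ * Real.exp (-t / ξ₁) ≤ μ z)
    (x y : ℕ) :
    (1 - α) ^ 2 * ∑ z ∈ Finset.range (h + 1), μ z ^ 2
      ≤ ∑' z, p t x z * p t y z := by
  obtain ⟨hα0, hα1⟩ := hα
  have ht' := ht.le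
  have hsμ : Summable μ := hμ_prob.summable
  -- pointwise lower bound on transition probabilities
  have key : ∀ w z, z ≤ h → (1 - α) * μ z ≤ p t w z := by
    intro w z hz
    have hf : Summable (fun z => p t w z - μ z) := (hp_prob t w ht').summable.sub hsμ
    have habs : Summable (fun z => |p t w z - μ z|) := hf.abs
    have hsum0 : ∑' z, (p t w z - μ z) = 0 := by
      rw [Summable.tsum_sub (hp_prob t w ht').summable hsμ] <;>
      simp [(hp_prob t w ht').tsum_eq, hμ_prob.tsum_eq]
    have hg : Summable (fun z => (|p t w z - μ z| - (p t w z - μ z)) / 2) :=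
      (habs.sub hf).div_const 2
    have hgsum : ∑' z, (|p t w z - μ z| - (p t w z - μ z)) / 2
        = (1 / 2) * ∑' z, |p t w z - μ z| := by
      rw [tsum_div_const, Summable.tsum_sub habs hf, hsum0]
      ring
    have hle : μ z - p t w z ≤ Real.exp (-t / ξ₁) := by
      have h1 : μ z - p t w z ≤ (|p t w z - μ z| - (p t w z - μ z)) / 2 := by
        have := neg_abs_le (p t w z - μ z)
        linarith
      have h2 : (|p t w z - μ z| - (p t w z - μ z)) / 2
          ≤ ∑' z, (|p t w z - μ z| - (p t w z - μ z)) / 2 := by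
        refine Summable.le_tsum hg z fun i _ => ?_
        linarith [le_abs_self (p t w i - μ i)]
      calc μ z - p t w z ≤ _ := h1.trans h2
        _ = (1 / 2) * ∑' z, |p t w z - μ z| := hgsum
        _ ≤ Real.exp (-t / ξ₁) := hTV w t ht'
    have hμz : α⁻¹ * Real.exp (-t / ξ₁) ≤ μ z := hh z hz
    have hexp : Real.exp (-t / ξ₁) ≤ α * μ z := by
      have := mul_le_mul_of_nonneg_left hμz hα0.le
      rwa [mul_inv_cancel_left₀ hα0.ne'] at this
    nlinarith
  -- termwise bound on the finite sum
  have hsum_le : ∀ z ∈ Finset.range (h + 1),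
      (1 - α) ^ 2 * μ z ^ 2 ≤ p t x z * p t y z := by
    intro z hz
    rw [Finset.mem_range, Nat.lt_succ_iff] at hz
    have h1 := key x z hz
    have h2 := key y z hz
    have hnn : 0 ≤ (1 - α) * μ z := mul_nonneg (by linarith) (hμ_nonneg z)
    calc (1 - α) ^ 2 * μ z ^ 2 = ((1 - α) * μ z) * ((1 - α) * μ z) := by ring
      _ ≤ p t x z * p t y z := mul_le_mul h1 h2 hnn (hp_nonneg t x z)
  -- summability of the product
  have hx1 : ∀ z, p t x z ≤ 1 := fun z =>
    le_hasSum (hp_prob t x ht') z fun i _ => hp_nonneg t x i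
  have hsprod : Summable (fun z => p t x z * p t y z) := by
    refine Summable.of_nonneg_of_le (fun z => mul_nonneg (hp_nonneg t x z) (hp_nonneg t y z))
      (fun z => ?_) (hp_prob t y ht').summable
    calc p t x z * p t y z ≤ 1 * p t y z :=
          mul_le_mul_of_nonneg_right (hx1 z) (hp_nonneg t y z)
      _ = p t y z := one_mul _
  calc (1 - α) ^ 2 * ∑ z ∈ Finset.range (h + 1), μ z ^ 2
      = ∑ z ∈ Finset.range (h + 1), (1 - α) ^ 2 * μ z ^ 2 := Finset.mul_sum _ _ _
    _ ≤ ∑ z ∈ Finset.range (h + 1), p t x z * p t y z := Finset.sum_le_sum hsum_le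
    _ ≤ ∑' z, p t x z * p t y z :=
        Summable.sum_le_tsum _ (fun i _ => mul_nonneg (hp_nonneg t x i) (hp_nonneg t y i)) hsprod
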